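/- (Safety) If ⊢ c : A ! Δ is derivable for a closed core Eff computation c and c ⇝* r for some result r (i.e., c evaluates in finitely many small steps to a result), then either r = val e with ⊢ e : A, or r = ι#op e (x.c') with ι#op ∈ Δ. -/

import Mathlib

namespace CoreEff

/-- Names for effects, instances and operation symbols. -/
structure Sig where
  Effect : Type
  Inst : Type
  Op : Type

/- Pure types and dirty types of core Eff.  A region is a finite set of
instances, a dirt a finite set of operations `ι#op`. -/
mutual
inductive PType (σ : Sig) : Type
  | bool : PType σ
  | nat : PType σ
  | unit : PType σ
  | empty : PType σ
  | fn : PType σ → DType σ → PType σ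
  | eff : σ.Effect → Finset σ.Inst → PType σ
  | hand : DType σ → DType σ → PType σ
inductive DType (σ : Sig) : Type
  | bang : PType σ → Finset (σ.Inst × σ.Op) → DType σ
end

/-- Assignment of effects to instances and operation symbols, and of
parameter/result types to operation symbols (the signatures `Σ_E`). -/
structure OpSig (σ : Sig) where
  instOf : σ.Inst → σ.Effect
  opOf : σ.Op → σ.Effect
  par : σ.Op → PType σ
  res : σ.Op → PType σ

/- Syntax of core Eff, with de Bruijn indices.
In an operation case `e#op x k ↦ c`, the body `c` binds `x` as index 1 and
`k` as index 0.  In `letrec f x = c₁ in c₂`, `c₁` binds `f` as 1 and `x` as 0,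
and `c₂` binds `f` as 0. -/
mutual
inductive Expr (σ : Sig) : Type
  | var : Nat → Expr σ
  | tt : Expr σ
  | ff : Expr σ
  | zero : Expr σ
  | succ : Expr σ → Expr σ
  | unit : Expr σ
  | fn : PType σ → Comp σ → Expr σ
  | inst : σ.Inst → Expr σ
  | handler : PType σ → Comp σ → OpCases σ → Expr σ
inductive OpCases (σ : Sig) : Type
  | nil : DType σ → OpCases σ
  | cons : Expr σ → σ.Op → Comp σ → OpCases σ → OpCases σ
inductive Comp (σ : Sig) : Type
  | ret : Expr σ → Comp σ
  | call : Expr σ → σ.Op → Expr σ → Comp σ → Comp σ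
  | handle : Expr σ → Comp σ → Comp σ
  | ite : Expr σ → Comp σ → Comp σ → Comp σ
  | case : Expr σ → Comp σ → Comp σ → Comp σ
  | absurd : DType σ → Expr σ → Comp σ
  | app : Expr σ → Expr σ → Comp σ
  | letin : Comp σ → Comp σ → Comp σ
  | letrec : PType σ → DType σ → Comp σ → Comp σ → Comp σ
end

/-- Pushing a renaming under one binder. -/
def liftRen (ξ : Nat → Nat) : Nat → Nat
  | 0 => 0
  | n + 1 => ξ n + 1

variable {σ : Sig}

mutual
def renameE (ξ : Nat → Nat) : Expr σ → Expr σ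
  | .var n => .var (ξ n)
  | .tt => .tt
  | .ff => .ff
  | .zero => .zero
  | .succ e => .succ (renameE ξ e)
  | .unit => .unit
  | .fn A c => .fn A (renameC (liftRen ξ) c)
  | .inst ι => .inst ι
  | .handler A cv ocs => .handler A (renameC (liftRen ξ) cv) (renameO ξ ocs)
def renameO (ξ : Nat → Nat) : OpCases σ → OpCases σ
  | .nil C => .nil C
  | .cons e op c ocs =>
      .cons (renameE ξ e) op (renameC (liftRen (liftRen ξ)) c) (renameO ξ ocs)
def renameC (ξ : Nat → Nat) : Comp σ → Comp σ
  | .ret e => .ret (renameE ξ e)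
  | .call e1 op e2 c => .call (renameE ξ e1) op (renameE ξ e2) (renameC (liftRen ξ) c)
  | .handle e c => .handle (renameE ξ e) (renameC ξ c)
  | .ite e c1 c2 => .ite (renameE ξ e) (renameC ξ c1) (renameC ξ c2)
  | .case e c1 c2 => .case (renameE ξ e) (renameC ξ c1) (renameC (liftRen ξ) c2)
  | .absurd C e => .absurd C (renameE ξ e)
  | .app e1 e2 => .app (renameE ξ e1) (renameE ξ e2)
  | .letin c1 c2 => .letin (renameC ξ c1) (renameC (liftRen ξ) c2)
  | .letrec A C c1 c2 =>
      .letrec A C (renameC (liftRen (liftRen ξ)) c1) (renameC (liftRen ξ) c2)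
end

/-- Weakening of an expression by one variable. -/
def shiftE (e : Expr σ) : Expr σ := renameE Nat.succ e

/-- Pushing a substitution under one binder. -/
def liftSub (s : Nat → Expr σ) : Nat → Expr σ
  | 0 => .var 0
  | n + 1 => shiftE (s n)

mutual
def substE (s : Nat → Expr σ) : Expr σ → Expr σ
  | .var n => s n
  | .tt => .tt
  | .ff => .ff
  | .zero => .zero
  | .succ e => .succ (substE s e)
  | .unit => .unit
  | .fn A c => .fn A (substC (liftSub s) c)
  | .inst ι => .inst ι
  | .handler A cv ocs => .handler A (substC (liftSub s) cv) (substO s ocs)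
def substO (s : Nat → Expr σ) : OpCases σ → OpCases σ
  | .nil C => .nil C
  | .cons e op c ocs =>
      .cons (substE s e) op (substC (liftSub (liftSub s)) c) (substO s ocs)
def substC (s : Nat → Expr σ) : Comp σ → Comp σ
  | .ret e => .ret (substE s e)
  | .call e1 op e2 c => .call (substE s e1) op (substE s e2) (substC (liftSub s) c)
  | .handle e c => .handle (substE s e) (substC s c)
  | .ite e c1 c2 => .ite (substE s e) (substC s c1) (substC s c2)
  | .case e c1 c2 => .case (substE s e) (substC s c1) (substC (liftSub s) c2)
  | .absurd C e => .absurd C (substE s e)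
  | .app e1 e2 => .app (substE s e1) (substE s e2)
  | .letin c1 c2 => .letin (substC s c1) (substC (liftSub s) c2)
  | .letrec A C c1 c2 =>
      .letrec A C (substC (liftSub (liftSub s)) c1) (substC (liftSub s) c2)
end

/-- Substituting an expression for the last-bound variable. -/
def sub1 (e : Expr σ) : Nat → Expr σ
  | 0 => e
  | n + 1 => .var n

/-- Substituting for the two last-bound variables (index 1 gets `e1`, index 0 gets `e0`). -/
def sub2 (e1 e0 : Expr σ) : Nat → Expr σ
  | 0 => e0
  | 1 => e1
  | n + 2 => .var n

def subst0E (e : Expr σ) (e' : Expr σ) : Expr σ := substE (sub1 e) e'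
def subst0C (e : Expr σ) (c : Comp σ) : Comp σ := substC (sub1 e) c
def subst2C (e1 e0 : Expr σ) (c : Comp σ) : Comp σ := substC (sub2 e1 e0) c

/-- Swap of the two last-bound variables. -/
def swap01 : Nat → Nat
  | 0 => 1
  | 1 => 0
  | n + 2 => n + 2

/-- The unfolding `fun x ↦ let rec f x = c₁ in c₁` of a recursive definition. -/
def recUnfold (A : PType σ) (C : DType σ) (c1 : Comp σ) : Expr σ :=
  .fn A (.letrec A C (renameC (liftRen (liftRen Nat.succ)) c1) (renameC swap01 c1))

/-- `Dispatch ocs ι op e κ c` means `c = ocs_{ι#op}(e, κ)`: the first operation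
case of `ocs` matching `ι#op` is selected (substituting `e` for the parameter
and `κ` for the continuation) and the call is re-raised, with continuation
`(y. κ y)`, if no case matches. -/
inductive Dispatch : OpCases σ → σ.Inst → σ.Op → Expr σ → Expr σ → Comp σ → Prop
  | nil {C ι op e κ} :
      Dispatch (.nil C) ι op e κ (.call (.inst ι) op e (.app (shiftE κ) (.var 0)))
  | found {ι op c ocs e κ} :
      Dispatch (.cons (.inst ι) op c ocs) ι op e κ (subst2C e κ c)
  | skip {e' op' c ocs ι op e κ c'} :
      (Expr.inst ι ≠ e' ∨ op ≠ op') →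
      Dispatch ocs ι op e κ c' →
      Dispatch (.cons e' op' c ocs) ι op e κ c'

/-- Small-step operational semantics `c ⇝ c'` of core Eff. -/
inductive Step (Ω : OpSig σ) : Comp σ → Comp σ → Prop
  | iteTrue {c1 c2} : Step Ω (.ite .tt c1 c2) c1
  | iteFalse {c1 c2} : Step Ω (.ite .ff c1 c2) c2
  | caseZero {c1 c2} : Step Ω (.case .zero c1 c2) c1
  | caseSucc {e c1 c2} : Step Ω (.case (.succ e) c1 c2) (subst0C e c2)
  | app {A c e} : Step Ω (.app (.fn A c) e) (subst0C e c)
  | letCong {c1 c1' c2} : Step Ω c1 c1' → Step Ω (.letin c1 c2) (.letin c1' c2)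
  | letVal {e c2} : Step Ω (.letin (.ret e) c2) (subst0C e c2)
  | letOp {ι op e c1 c2} :
      Step Ω (.letin (.call (.inst ι) op e c1) c2)
        (.call (.inst ι) op e (.letin c1 (renameC (liftRen Nat.succ) c2)))
  | letrec {A C c1 c2} : Step Ω (.letrec A C c1 c2) (subst0C (recUnfold A C c1) c2)
  | handleCong {h c c'} : Step Ω c c' → Step Ω (.handle h c) (.handle h c')
  | handleVal {A cv ocs e} :
      Step Ω (.handle (.handler A cv ocs) (.ret e)) (subst0C e cv)
  | handleOp {A cv ocs ι op e c c'} :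
      Dispatch ocs ι op e
        (.fn (Ω.res op) (.handle (shiftE (.handler A cv ocs)) c)) c' →
      Step Ω (.handle (.handler A cv ocs) (.call (.inst ι) op e c)) c'

/-- Big-step operational semantics `c ⇓ r` of core Eff; results are `val e`
and operation calls `ι#op e (y.c)`. -/
inductive Big (Ω : OpSig σ) : Comp σ → Comp σ → Prop
  | ret {e} : Big Ω (.ret e) (.ret e)
  | call {ι op e c} : Big Ω (.call (.inst ι) op e c) (.call (.inst ι) op e c)
  | iteTrue {c1 c2 r} : Big Ω c1 r → Big Ω (.ite .tt c1 c2) r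
  | iteFalse {c1 c2 r} : Big Ω c2 r → Big Ω (.ite .ff c1 c2) r
  | caseZero {c1 c2 r} : Big Ω c1 r → Big Ω (.case .zero c1 c2) r
  | caseSucc {e c1 c2 r} : Big Ω (subst0C e c2) r → Big Ω (.case (.succ e) c1 c2) r
  | app {A c e r} : Big Ω (subst0C e c) r → Big Ω (.app (.fn A c) e) r
  | letVal {c1 c2 e r} : Big Ω c1 (.ret e) → Big Ω (subst0C e c2) r →
      Big Ω (.letin c1 c2) r
  | letOp {c1 c2 ι op e c} : Big Ω c1 (.call (.inst ι) op e c) →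
      Big Ω (.letin c1 c2)
        (.call (.inst ι) op e (.letin c (renameC (liftRen Nat.succ) c2)))
  | letrec {A C c1 c2 r} : Big Ω (subst0C (recUnfold A C c1) c2) r →
      Big Ω (.letrec A C c1 c2) r
  | handleVal {A cv ocs c e r} : Big Ω c (.ret e) → Big Ω (subst0C e cv) r →
      Big Ω (.handle (.handler A cv ocs) c) r
  | handleOp {A cv ocs c ι op e c' c'' r} :
      Big Ω c (.call (.inst ι) op e c') →
      Dispatch ocs ι op e
        (.fn (Ω.res op) (.handle (shiftE (.handler A cv ocs)) c')) c'' →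
      Big Ω c'' r →
      Big Ω (.handle (.handler A cv ocs) c) r

/-- `c ⇝* r`: iterated small steps ending in a result. -/
inductive StarStep (Ω : OpSig σ) : Comp σ → Comp σ → Prop
  | ret {e} : StarStep Ω (.ret e) (.ret e)
  | call {ι op e c} : StarStep Ω (.call (.inst ι) op e c) (.call (.inst ι) op e c)
  | step {c c' r} : Step Ω c c' → StarStep Ω c' r → StarStep Ω c r

/- Structural subtyping of pure and dirty types. -/
mutual
inductive SubP (σ : Sig) : PType σ → PType σ → Prop
  | bool : SubP σ .bool .bool
  | nat : SubP σ .nat .nat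
  | unit : SubP σ .unit .unit
  | empty : SubP σ .empty .empty
  | fn {A A' C C'} : SubP σ A' A → SubD σ C C' → SubP σ (.fn A C) (.fn A' C')
  | eff {E R R'} : R ⊆ R' → SubP σ (.eff E R) (.eff E R')
  | hand {C C' D D'} : SubD σ C' C → SubD σ D D' → SubP σ (.hand C D) (.hand C' D')
inductive SubD (σ : Sig) : DType σ → DType σ → Prop
  | bang {A A' Δ Δ'} : SubP σ A A' → Δ ⊆ Δ' → SubD σ (.bang A Δ) (.bang A' Δ')
end

/- The effect system of core Eff: typing of expressions, operation cases
(`Γ ⊢ ocs : C / Δ`) and computations, with subsumption. -/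
mutual
inductive HasTypeE (σ : Sig) (Ω : OpSig σ) [DecidableEq σ.Inst] [DecidableEq σ.Op] :
    List (PType σ) → Expr σ → PType σ → Prop
  | var {Γ n A} : Γ[n]? = some A → HasTypeE σ Ω Γ (.var n) A
  | tt {Γ} : HasTypeE σ Ω Γ .tt .bool
  | ff {Γ} : HasTypeE σ Ω Γ .ff .bool
  | zero {Γ} : HasTypeE σ Ω Γ .zero .nat
  | succ {Γ e} : HasTypeE σ Ω Γ e .nat → HasTypeE σ Ω Γ (.succ e) .nat
  | unit {Γ} : HasTypeE σ Ω Γ .unit .unit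
  | fn {Γ A c C} : HasTypeC σ Ω (A :: Γ) c C → HasTypeE σ Ω Γ (.fn A c) (.fn A C)
  | inst {Γ ι E R} : ι ∈ R → (∀ κ ∈ R, Ω.instOf κ = E) →
      HasTypeE σ Ω Γ (.inst ι) (.eff E R)
  | handler {Γ A cv ocs B Δ Δ' Δ''} :
      HasTypeC σ Ω (A :: Γ) cv (.bang B Δ') →
      HasTypeO σ Ω Γ ocs (.bang B Δ') Δ'' →
      Δ ⊆ Δ'' ∪ Δ' →
      HasTypeE σ Ω Γ (.handler A cv ocs) (.hand (.bang A Δ) (.bang B Δ'))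
  | sub {Γ e A A'} : HasTypeE σ Ω Γ e A → SubP σ A A' → HasTypeE σ Ω Γ e A'
inductive HasTypeO (σ : Sig) (Ω : OpSig σ) [DecidableEq σ.Inst] [DecidableEq σ.Op] :
    List (PType σ) → OpCases σ → DType σ → Finset (σ.Inst × σ.Op) → Prop
  | nil {Γ C} : HasTypeO σ Ω Γ (.nil C) C ∅
  | cons {Γ e op c ocs E R C Δ Δ'} :
      HasTypeE σ Ω Γ e (.eff E R) →
      Ω.opOf op = E →
      HasTypeC σ Ω (.fn (Ω.res op) C :: Ω.par op :: Γ) c C →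
      HasTypeO σ Ω Γ ocs C Δ' →
      (∀ ι, R = {ι} → Δ ⊆ insert (ι, op) Δ') →
      ((¬ ∃ ι, R = {ι}) → Δ ⊆ Δ') →
      HasTypeO σ Ω Γ (.cons e op c ocs) C Δ
inductive HasTypeC (σ : Sig) (Ω : OpSig σ) [DecidableEq σ.Inst] [DecidableEq σ.Op] :
    List (PType σ) → Comp σ → DType σ → Prop
  | ret {Γ e A Δ} : HasTypeE σ Ω Γ e A → HasTypeC σ Ω Γ (.ret e) (.bang A Δ)
  | call {Γ e1 op e2 c E R A Δ} :
      HasTypeE σ Ω Γ e1 (.eff E R) →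
      Ω.opOf op = E →
      HasTypeE σ Ω Γ e2 (Ω.par op) →
      HasTypeC σ Ω (Ω.res op :: Γ) c (.bang A Δ) →
      (∀ ι ∈ R, (ι, op) ∈ Δ) →
      HasTypeC σ Ω Γ (.call e1 op e2 c) (.bang A Δ)
  | handle {Γ e c C D} : HasTypeE σ Ω Γ e (.hand C D) → HasTypeC σ Ω Γ c C →
      HasTypeC σ Ω Γ (.handle e c) D
  | ite {Γ e c1 c2 C} : HasTypeE σ Ω Γ e .bool → HasTypeC σ Ω Γ c1 C →
      HasTypeC σ Ω Γ c2 C → HasTypeC σ Ω Γ (.ite e c1 c2) C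
  | case {Γ e c1 c2 C} : HasTypeE σ Ω Γ e .nat → HasTypeC σ Ω Γ c1 C →
      HasTypeC σ Ω (.nat :: Γ) c2 C → HasTypeC σ Ω Γ (.case e c1 c2) C
  | absurd {Γ e C} : HasTypeE σ Ω Γ e .empty → HasTypeC σ Ω Γ (.absurd C e) C
  | app {Γ e1 e2 A C} : HasTypeE σ Ω Γ e1 (.fn A C) → HasTypeE σ Ω Γ e2 A →
      HasTypeC σ Ω Γ (.app e1 e2) C
  | letin {Γ c1 c2 A B Δ} : HasTypeC σ Ω Γ c1 (.bang A Δ) →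
      HasTypeC σ Ω (A :: Γ) c2 (.bang B Δ) →
      HasTypeC σ Ω Γ (.letin c1 c2) (.bang B Δ)
  | letrec {Γ A C c1 c2 D} :
      HasTypeC σ Ω (A :: .fn A C :: Γ) c1 C →
      HasTypeC σ Ω (.fn A C :: Γ) c2 D →
      HasTypeC σ Ω Γ (.letrec A C c1 c2) D
  | sub {Γ c C C'} : HasTypeC σ Ω Γ c C → SubD σ C C' → HasTypeC σ Ω Γ c C'
end

/-- Skeletal types: pure/dirty types with all effect information erased. -/
inductive SType (σ : Sig) : Type
  | bool : SType σ
  | nat : SType σ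
  | unit : SType σ
  | empty : SType σ
  | fn : SType σ → SType σ → SType σ
  | eff : σ.Effect → SType σ
  | hand : SType σ → SType σ → SType σ

/- Skeletal erasure of pure and dirty types. -/
mutual
def skelP : PType σ → SType σ
  | .bool => .bool
  | .nat => .nat
  | .unit => .unit
  | .empty => .empty
  | .fn A C => .fn (skelP A) (skelD C)
  | .eff E _ => .eff E
  | .hand C D => .hand (skelD C) (skelD D)
def skelD : DType σ → SType σ
  | .bang A _ => skelP A
end

/- The skeletal type system: the rules of core Eff with all effect
information erased and without subsumption. -/
mutual
inductive SHasTypeE (σ : Sig) (Ω : OpSig σ) :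
    List (SType σ) → Expr σ → SType σ → Prop
  | var {Γ n S} : Γ[n]? = some S → SHasTypeE σ Ω Γ (.var n) S
  | tt {Γ} : SHasTypeE σ Ω Γ .tt .bool
  | ff {Γ} : SHasTypeE σ Ω Γ .ff .bool
  | zero {Γ} : SHasTypeE σ Ω Γ .zero .nat
  | succ {Γ e} : SHasTypeE σ Ω Γ e .nat → SHasTypeE σ Ω Γ (.succ e) .nat
  | unit {Γ} : SHasTypeE σ Ω Γ .unit .unit
  | fn {Γ A c T} : SHasTypeC σ Ω (skelP A :: Γ) c T →
      SHasTypeE σ Ω Γ (.fn A c) (.fn (skelP A) T)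
  | inst {Γ ι} : SHasTypeE σ Ω Γ (.inst ι) (.eff (Ω.instOf ι))
  | handler {Γ A cv ocs T} :
      SHasTypeC σ Ω (skelP A :: Γ) cv T →
      SHasTypeO σ Ω Γ ocs T →
      SHasTypeE σ Ω Γ (.handler A cv ocs) (.hand (skelP A) T)
inductive SHasTypeO (σ : Sig) (Ω : OpSig σ) :
    List (SType σ) → OpCases σ → SType σ → Prop
  | nil {Γ C} : SHasTypeO σ Ω Γ (.nil C) (skelD C)
  | cons {Γ e op c ocs T} :
      SHasTypeE σ Ω Γ e (.eff (Ω.opOf op)) →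
      SHasTypeC σ Ω (.fn (skelP (Ω.res op)) T :: skelP (Ω.par op) :: Γ) c T →
      SHasTypeO σ Ω Γ ocs T →
      SHasTypeO σ Ω Γ (.cons e op c ocs) T
inductive SHasTypeC (σ : Sig) (Ω : OpSig σ) :
    List (SType σ) → Comp σ → SType σ → Prop
  | ret {Γ e S} : SHasTypeE σ Ω Γ e S → SHasTypeC σ Ω Γ (.ret e) S
  | call {Γ e1 op e2 c T} :
      SHasTypeE σ Ω Γ e1 (.eff (Ω.opOf op)) →
      SHasTypeE σ Ω Γ e2 (skelP (Ω.par op)) →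
      SHasTypeC σ Ω (skelP (Ω.res op) :: Γ) c T →
      SHasTypeC σ Ω Γ (.call e1 op e2 c) T
  | handle {Γ e c S T} : SHasTypeE σ Ω Γ e (.hand S T) → SHasTypeC σ Ω Γ c S →
      SHasTypeC σ Ω Γ (.handle e c) T
  | ite {Γ e c1 c2 T} : SHasTypeE σ Ω Γ e .bool → SHasTypeC σ Ω Γ c1 T →
      SHasTypeC σ Ω Γ c2 T → SHasTypeC σ Ω Γ (.ite e c1 c2) T
  | case {Γ e c1 c2 T} : SHasTypeE σ Ω Γ e .nat → SHasTypeC σ Ω Γ c1 T →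
      SHasTypeC σ Ω (.nat :: Γ) c2 T → SHasTypeC σ Ω Γ (.case e c1 c2) T
  | absurd {Γ e C} : SHasTypeE σ Ω Γ e .empty → SHasTypeC σ Ω Γ (.absurd C e) (skelD C)
  | app {Γ e1 e2 S T} : SHasTypeE σ Ω Γ e1 (.fn S T) → SHasTypeE σ Ω Γ e2 S →
      SHasTypeC σ Ω Γ (.app e1 e2) T
  | letin {Γ c1 c2 S T} : SHasTypeC σ Ω Γ c1 S → SHasTypeC σ Ω (S :: Γ) c2 T →
      SHasTypeC σ Ω Γ (.letin c1 c2) T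
  | letrec {Γ A C c1 c2 T} :
      SHasTypeC σ Ω (skelP A :: .fn (skelP A) (skelD C) :: Γ) c1 (skelD C) →
      SHasTypeC σ Ω (.fn (skelP A) (skelD C) :: Γ) c2 T →
      SHasTypeC σ Ω Γ (.letrec A C c1 c2) T
end

end CoreEff

set_option linter.unusedVariables false
set_option linter.unusedSectionVars false
set_option linter.unusedTactic false

namespace CoreEff
variable {σ : Sig} {Ω : OpSig σ} [DecidableEq σ.Inst] [DecidableEq σ.Op]

mutual
theorem SubP.refl : (A : PType σ) → SubP σ A A
  | .bool => .bool
  | .nat => .nat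
  | .unit => .unit
  | .empty => .empty
  | .fn A C => .fn (SubP.refl A) (SubD.refl C)
  | .eff _ _ => .eff le_rfl
  | .hand C D => .hand (SubD.refl C) (SubD.refl D)
theorem SubD.refl : (C : DType σ) → SubD σ C C
  | .bang A _ => .bang (SubP.refl A) le_rfl
end

mutual
theorem SubP.trans : {A B C : PType σ} → SubP σ A B → SubP σ B C → SubP σ A C
  | _, _, _, .bool, .bool => .bool
  | _, _, _, .nat, .nat => .nat
  | _, _, _, .unit, .unit => .unit
  | _, _, _, .empty, .empty => .empty
  | _, _, _, .fn h1 h2, .fn h1' h2' => .fn (SubP.trans h1' h1) (SubD.trans h2 h2')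
  | _, _, _, .eff h, .eff h' => .eff (h.trans h')
  | _, _, _, .hand h1 h2, .hand h1' h2' => .hand (SubD.trans h1' h1) (SubD.trans h2 h2')
theorem SubD.trans : {A B C : DType σ} → SubD σ A B → SubD σ B C → SubD σ A C
  | _, _, _, .bang h hd, .bang h' hd' => .bang (SubP.trans h h') (hd.trans hd')
end

def SubOK (s : Nat → Expr σ) (Γ Γ' : List (PType σ)) : Prop :=
  ∀ n A, Γ[n]? = some A → HasTypeE σ Ω Γ' (s n) A

def RenOK (ξ : Nat → Nat) (Γ Γ' : List (PType σ)) : Prop :=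
  ∀ n A, Γ[n]? = some A → Γ'[ξ n]? = some A

theorem liftRen_ok {ξ : Nat → Nat} {Γ Γ' : List (PType σ)} (h : RenOK ξ Γ Γ') (A : PType σ) :
    RenOK (liftRen ξ) (A :: Γ) (A :: Γ')
  | 0, _, hB => hB
  | n + 1, B, hB => h n B hB

theorem succ_ok {Γ : List (PType σ)} (A : PType σ) : RenOK Nat.succ Γ (A :: Γ) :=
  fun _ _ h => h

theorem swap_ok {Γ : List (PType σ)} (X Y : PType σ) :
    RenOK swap01 (X :: Y :: Γ) (Y :: X :: Γ)
  | 0, _, hB => hB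
  | 1, _, hB => hB
  | _ + 2, _, hB => hB

theorem renE {Γ : List (PType σ)} {e A} (h : HasTypeE σ Ω Γ e A) :
    ∀ ξ Γ', RenOK ξ Γ Γ' → HasTypeE σ Ω Γ' (renameE ξ e) A := by
  induction h using HasTypeE.rec
    (motive_2 := fun Γ ocs C Δ _ => ∀ ξ Γ', RenOK ξ Γ Γ' → HasTypeO σ Ω Γ' (renameO ξ ocs) C Δ)
    (motive_3 := fun Γ c C _ => ∀ ξ Γ', RenOK ξ Γ Γ' → HasTypeC σ Ω Γ' (renameC ξ c) C)
  case var => intros; rename_i hn _ _ hξ; exact .var (hξ _ _ hn)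
  case tt => intros; rename_i _ _ hξ; exact .tt
  case ff => intros; rename_i _ _ hξ; exact .ff
  case zero => intros; rename_i _ _ hξ; exact .zero
  case succ => intros; rename_i ih _ _ hξ; exact .succ (ih _ _ hξ)
  case unit => intros; rename_i _ _ hξ; exact .unit
  case fn => intros; rename_i ih _ _ hξ; exact .fn (ih _ _ (liftRen_ok hξ _))
  case inst => intros; rename_i h1 h2 _ _ hξ; exact .inst h1 h2
  case handler => intros; rename_i hsub ihc iho _ _ hξ; exact .handler (ihc _ _ (liftRen_ok hξ _)) (iho _ _ hξ) hsub
  case sub => intros; rename_i hs ih _ _ hξ; exact .sub (ih _ _ hξ) hs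
  case nil => intros; rename_i _ _ hξ; exact .nil
  case cons => intros; rename_i hop _ _ h1 h2 ihe ihc iho _ _ hξ; exact .cons (ihe _ _ hξ) hop (ihc _ _ (liftRen_ok (liftRen_ok hξ _) _)) (iho _ _ hξ) h1 h2
  case ret => intros; rename_i ih _ _ hξ; exact .ret (ih _ _ hξ)
  case call => intros; rename_i hop _ _ hR ihe1 ihe2 ihc _ _ hξ; exact .call (ihe1 _ _ hξ) hop (ihe2 _ _ hξ) (ihc _ _ (liftRen_ok hξ _)) hR
  case handle => intros; rename_i ihe ihc _ _ hξ; exact .handle (ihe _ _ hξ) (ihc _ _ hξ)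
  case ite => intros; rename_i ihe ih1 ih2 _ _ hξ; exact .ite (ihe _ _ hξ) (ih1 _ _ hξ) (ih2 _ _ hξ)
  case case => intros; rename_i ihe ih1 ih2 _ _ hξ; exact .case (ihe _ _ hξ) (ih1 _ _ hξ) (ih2 _ _ (liftRen_ok hξ _))
  case absurd => intros; rename_i ih _ _ hξ; exact .absurd (ih _ _ hξ)
  case app => intros; rename_i ih1 ih2 _ _ hξ; exact .app (ih1 _ _ hξ) (ih2 _ _ hξ)
  case letin => intros; rename_i ih1 ih2 _ _ hξ; exact .letin (ih1 _ _ hξ) (ih2 _ _ (liftRen_ok hξ _))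
  case letrec => intros; rename_i ih1 ih2 _ _ hξ; exact .letrec (ih1 _ _ (liftRen_ok (liftRen_ok hξ _) _)) (ih2 _ _ (liftRen_ok hξ _))
  case sub => intros; rename_i hs ih _ _ hξ; exact .sub (ih _ _ hξ) hs

theorem renC {Γ : List (PType σ)} {c C} (h : HasTypeC σ Ω Γ c C) :
    ∀ ξ Γ', RenOK ξ Γ Γ' → HasTypeC σ Ω Γ' (renameC ξ c) C := by
  induction h using HasTypeC.rec
    (motive_1 := fun Γ e A _ => ∀ ξ Γ', RenOK ξ Γ Γ' → HasTypeE σ Ω Γ' (renameE ξ e) A)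
    (motive_2 := fun Γ ocs C Δ _ => ∀ ξ Γ', RenOK ξ Γ Γ' → HasTypeO σ Ω Γ' (renameO ξ ocs) C Δ)
  case var => intros; rename_i hn _ _ hξ; exact .var (hξ _ _ hn)
  case tt => intros; rename_i _ _ hξ; exact .tt
  case ff => intros; rename_i _ _ hξ; exact .ff
  case zero => intros; rename_i _ _ hξ; exact .zero
  case succ => intros; rename_i ih _ _ hξ; exact .succ (ih _ _ hξ)
  case unit => intros; rename_i _ _ hξ; exact .unit
  case fn => intros; rename_i ih _ _ hξ; exact .fn (ih _ _ (liftRen_ok hξ _))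
  case inst => intros; rename_i h1 h2 _ _ hξ; exact .inst h1 h2
  case handler => intros; rename_i hsub ihc iho _ _ hξ; exact .handler (ihc _ _ (liftRen_ok hξ _)) (iho _ _ hξ) hsub
  case sub => intros; rename_i hs ih _ _ hξ; exact .sub (ih _ _ hξ) hs
  case nil => intros; rename_i _ _ hξ; exact .nil
  case cons => intros; rename_i hop _ _ h1 h2 ihe ihc iho _ _ hξ; exact .cons (ihe _ _ hξ) hop (ihc _ _ (liftRen_ok (liftRen_ok hξ _) _)) (iho _ _ hξ) h1 h2
  case ret => intros; rename_i ih _ _ hξ; exact .ret (ih _ _ hξ)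
  case call => intros; rename_i hop _ _ hR ihe1 ihe2 ihc _ _ hξ; exact .call (ihe1 _ _ hξ) hop (ihe2 _ _ hξ) (ihc _ _ (liftRen_ok hξ _)) hR
  case handle => intros; rename_i ihe ihc _ _ hξ; exact .handle (ihe _ _ hξ) (ihc _ _ hξ)
  case ite => intros; rename_i ihe ih1 ih2 _ _ hξ; exact .ite (ihe _ _ hξ) (ih1 _ _ hξ) (ih2 _ _ hξ)
  case case => intros; rename_i ihe ih1 ih2 _ _ hξ; exact .case (ihe _ _ hξ) (ih1 _ _ hξ) (ih2 _ _ (liftRen_ok hξ _))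
  case absurd => intros; rename_i ih _ _ hξ; exact .absurd (ih _ _ hξ)
  case app => intros; rename_i ih1 ih2 _ _ hξ; exact .app (ih1 _ _ hξ) (ih2 _ _ hξ)
  case letin => intros; rename_i ih1 ih2 _ _ hξ; exact .letin (ih1 _ _ hξ) (ih2 _ _ (liftRen_ok hξ _))
  case letrec => intros; rename_i ih1 ih2 _ _ hξ; exact .letrec (ih1 _ _ (liftRen_ok (liftRen_ok hξ _) _)) (ih2 _ _ (liftRen_ok hξ _))
  case sub => intros; rename_i hs ih _ _ hξ; exact .sub (ih _ _ hξ) hs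


theorem shiftE_ty {Γ : List (PType σ)} {e A} (h : HasTypeE σ Ω Γ e A) (B : PType σ) :
    HasTypeE σ Ω (B :: Γ) (shiftE e) A := renE h Nat.succ _ (succ_ok B)

theorem liftSub_ok {s : Nat → Expr σ} {Γ Γ'} (h : SubOK (Ω := Ω) s Γ Γ') (A : PType σ) :
    SubOK (Ω := Ω) (liftSub s) (A :: Γ) (A :: Γ')
  | 0, _, hB => .var hB
  | n + 1, B, hB => shiftE_ty (h n B hB) A

theorem subC {Γ : List (PType σ)} {c C} (h : HasTypeC σ Ω Γ c C) :
    ∀ s Γ', SubOK (Ω := Ω) s Γ Γ' → HasTypeC σ Ω Γ' (substC s c) C := by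
  induction h using HasTypeC.rec
    (motive_1 := fun Γ e A _ => ∀ s Γ', SubOK (Ω := Ω) s Γ Γ' → HasTypeE σ Ω Γ' (substE s e) A)
    (motive_2 := fun Γ ocs C Δ _ => ∀ s Γ', SubOK (Ω := Ω) s Γ Γ' → HasTypeO σ Ω Γ' (substO s ocs) C Δ)
  case var => intros; rename_i hn _ _ hs0; exact hs0 _ _ hn
  case tt => intros; rename_i _ _ hs0; exact .tt
  case ff => intros; rename_i _ _ hs0; exact .ff
  case zero => intros; rename_i _ _ hs0; exact .zero
  case succ => intros; rename_i ih _ _ hs0; exact .succ (ih _ _ hs0)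
  case unit => intros; rename_i _ _ hs0; exact .unit
  case fn => intros; rename_i ih _ _ hs0; exact .fn (ih _ _ (liftSub_ok hs0 _))
  case inst => intros; rename_i h1 h2 _ _ hs0; exact .inst h1 h2
  case handler => intros; rename_i hsub ihc iho _ _ hs0; exact .handler (ihc _ _ (liftSub_ok hs0 _)) (iho _ _ hs0) hsub
  case sub => intros; rename_i hs ih _ _ hs0; exact .sub (ih _ _ hs0) hs
  case nil => intros; rename_i _ _ hs0; exact .nil
  case cons => intros; rename_i hop _ _ h1 h2 ihe ihc iho _ _ hs0; exact .cons (ihe _ _ hs0) hop (ihc _ _ (liftSub_ok (liftSub_ok hs0 _) _)) (iho _ _ hs0) h1 h2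
  case ret => intros; rename_i ih _ _ hs0; exact .ret (ih _ _ hs0)
  case call => intros; rename_i hop _ _ hR ihe1 ihe2 ihc _ _ hs0; exact .call (ihe1 _ _ hs0) hop (ihe2 _ _ hs0) (ihc _ _ (liftSub_ok hs0 _)) hR
  case handle => intros; rename_i ihe ihc _ _ hs0; exact .handle (ihe _ _ hs0) (ihc _ _ hs0)
  case ite => intros; rename_i ihe ih1 ih2 _ _ hs0; exact .ite (ihe _ _ hs0) (ih1 _ _ hs0) (ih2 _ _ hs0)
  case case => intros; rename_i ihe ih1 ih2 _ _ hs0; exact .case (ihe _ _ hs0) (ih1 _ _ hs0) (ih2 _ _ (liftSub_ok hs0 _))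
  case absurd => intros; rename_i ih _ _ hs0; exact .absurd (ih _ _ hs0)
  case app => intros; rename_i ih1 ih2 _ _ hs0; exact .app (ih1 _ _ hs0) (ih2 _ _ hs0)
  case letin => intros; rename_i ih1 ih2 _ _ hs0; exact .letin (ih1 _ _ hs0) (ih2 _ _ (liftSub_ok hs0 _))
  case letrec => intros; rename_i ih1 ih2 _ _ hs0; exact .letrec (ih1 _ _ (liftSub_ok (liftSub_ok hs0 _) _)) (ih2 _ _ (liftSub_ok hs0 _))
  case sub => intros; rename_i hs ih _ _ hs0; exact .sub (ih _ _ hs0) hs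


theorem sub1_ok {Γ : List (PType σ)} {e A} (h : HasTypeE σ Ω Γ e A) :
    SubOK (Ω := Ω) (sub1 e) (A :: Γ) Γ
  | 0, _, hB => by cases hB; exact h
  | _ + 1, _, hB => .var hB

theorem subst0C_ty {Γ : List (PType σ)} {e A c C} (he : HasTypeE σ Ω Γ e A)
    (hc : HasTypeC σ Ω (A :: Γ) c C) : HasTypeC σ Ω Γ (subst0C e c) C :=
  subC hc _ _ (sub1_ok he)

theorem sub2_ok {Γ : List (PType σ)} {e1 e0 A1 A0} (h1 : HasTypeE σ Ω Γ e1 A1)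
    (h0 : HasTypeE σ Ω Γ e0 A0) : SubOK (Ω := Ω) (sub2 e1 e0) (A0 :: A1 :: Γ) Γ
  | 0, _, hB => by cases hB; exact h0
  | 1, _, hB => by cases hB; exact h1
  | _ + 2, _, hB => .var hB

theorem subst2C_ty {Γ : List (PType σ)} {e1 e0 A1 A0 c C} (h1 : HasTypeE σ Ω Γ e1 A1)
    (h0 : HasTypeE σ Ω Γ e0 A0) (hc : HasTypeC σ Ω (A0 :: A1 :: Γ) c C) :
    HasTypeC σ Ω Γ (subst2C e1 e0 c) C :=
  subC hc _ _ (sub2_ok h1 h0)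

end CoreEff

namespace CoreEff
variable {σ : Sig} {Ω : OpSig σ} [DecidableEq σ.Inst] [DecidableEq σ.Op]

theorem ret_inv {Γ : List (PType σ)} {c0 C} (h : HasTypeC σ Ω Γ c0 C) :
    ∀ e A Δ, c0 = .ret e → C = .bang A Δ → HasTypeE σ Ω Γ e A := by
  induction h using HasTypeC.rec
    (motive_1 := fun _ _ _ _ => True) (motive_2 := fun _ _ _ _ _ => True)
  all_goals try trivial
  all_goals intros
  case ret => simp_all
  case sub => rename_i hs ih _ _ _ h1 h2; subst h1 h2; cases hs; rename_i hA hΔ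
              exact .sub (ih _ _ _ rfl rfl) hA
  all_goals simp_all

theorem ite_inv {Γ : List (PType σ)} {c0 C} (h : HasTypeC σ Ω Γ c0 C) :
    ∀ e c1 c2, c0 = .ite e c1 c2 →
      HasTypeE σ Ω Γ e .bool ∧ HasTypeC σ Ω Γ c1 C ∧ HasTypeC σ Ω Γ c2 C := by
  induction h using HasTypeC.rec
    (motive_1 := fun _ _ _ _ => True) (motive_2 := fun _ _ _ _ _ => True)
  all_goals try trivial
  all_goals intros
  case ite => rename_i he h1 h2 _ _ _ _ _ _ heq; cases heq; exact ⟨he, h1, h2⟩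
  case sub => rename_i hs ih _ _ _ h1
              obtain ⟨a, b, c⟩ := ih _ _ _ h1
              exact ⟨a, .sub b hs, .sub c hs⟩
  all_goals simp_all

theorem case_inv {Γ : List (PType σ)} {c0 C} (h : HasTypeC σ Ω Γ c0 C) :
    ∀ e c1 c2, c0 = .case e c1 c2 →
      HasTypeE σ Ω Γ e .nat ∧ HasTypeC σ Ω Γ c1 C ∧ HasTypeC σ Ω (.nat :: Γ) c2 C := by
  induction h using HasTypeC.rec
    (motive_1 := fun _ _ _ _ => True) (motive_2 := fun _ _ _ _ _ => True)
  all_goals try trivial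
  all_goals intros
  case case => rename_i he h1 h2 _ _ _ _ _ _ heq; cases heq; exact ⟨he, h1, h2⟩
  case sub => rename_i hs ih _ _ _ h1
              obtain ⟨a, b, c⟩ := ih _ _ _ h1
              exact ⟨a, .sub b hs, .sub c hs⟩
  all_goals simp_all

theorem app_inv {Γ : List (PType σ)} {c0 C} (h : HasTypeC σ Ω Γ c0 C) :
    ∀ e1 e2, c0 = .app e1 e2 →
      ∃ A, HasTypeE σ Ω Γ e1 (.fn A C) ∧ HasTypeE σ Ω Γ e2 A := by
  induction h using HasTypeC.rec
    (motive_1 := fun _ _ _ _ => True) (motive_2 := fun _ _ _ _ _ => True)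
  all_goals try trivial
  all_goals intros
  case app => rename_i h1 h2 _ _ _ _ heq; cases heq; exact ⟨_, h1, h2⟩
  case sub => rename_i hs ih _ _ h1
              obtain ⟨A, a, b⟩ := ih _ _ h1
              exact ⟨A, .sub a (.fn (SubP.refl _) hs), b⟩
  all_goals simp_all

theorem handle_inv {Γ : List (PType σ)} {c0 C} (h : HasTypeC σ Ω Γ c0 C) :
    ∀ e c, c0 = .handle e c →
      ∃ C₁, HasTypeE σ Ω Γ e (.hand C₁ C) ∧ HasTypeC σ Ω Γ c C₁ := by
  induction h using HasTypeC.rec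
    (motive_1 := fun _ _ _ _ => True) (motive_2 := fun _ _ _ _ _ => True)
  all_goals try trivial
  all_goals intros
  case handle => rename_i he hc _ _ _ _ heq; cases heq; exact ⟨_, he, hc⟩
  case sub => rename_i hs ih _ _ h1
              obtain ⟨C₁, a, b⟩ := ih _ _ h1
              exact ⟨C₁, .sub a (.hand (SubD.refl _) hs), b⟩
  all_goals simp_all

theorem letin_inv {Γ : List (PType σ)} {c0 C} (h : HasTypeC σ Ω Γ c0 C) :
    ∀ c1 c2 B Δ, c0 = .letin c1 c2 → C = .bang B Δ →
      ∃ A, HasTypeC σ Ω Γ c1 (.bang A Δ) ∧ HasTypeC σ Ω (A :: Γ) c2 (.bang B Δ) := by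
  induction h using HasTypeC.rec
    (motive_1 := fun _ _ _ _ => True) (motive_2 := fun _ _ _ _ _ => True)
  all_goals try trivial
  all_goals intros
  case letin => rename_i h1 h2 _ _ _ _ _ _ heq hC; cases heq; cases hC; exact ⟨_, h1, h2⟩
  case sub => rename_i hs ih _ _ _ _ h1 h2; subst h1 h2; cases hs; rename_i hA hΔ
              obtain ⟨A, a, b⟩ := ih _ _ _ _ rfl rfl
              exact ⟨A, .sub a (.bang (SubP.refl _) hΔ), .sub b (.bang hA hΔ)⟩
  all_goals simp_all

theorem letrec_inv {Γ : List (PType σ)} {c0 D} (h : HasTypeC σ Ω Γ c0 D) :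
    ∀ A C c1 c2, c0 = .letrec A C c1 c2 →
      HasTypeC σ Ω (A :: .fn A C :: Γ) c1 C ∧ HasTypeC σ Ω (.fn A C :: Γ) c2 D := by
  induction h using HasTypeC.rec
    (motive_1 := fun _ _ _ _ => True) (motive_2 := fun _ _ _ _ _ => True)
  all_goals try trivial
  all_goals intros
  case letrec => rename_i h1 h2 _ _ _ _ _ _ heq; cases heq; exact ⟨h1, h2⟩
  case sub => rename_i hs ih _ _ _ _ h1
              obtain ⟨a, b⟩ := ih _ _ _ _ h1
              exact ⟨a, .sub b hs⟩
  all_goals simp_all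

theorem call_inv {Γ : List (PType σ)} {c0 C} (h : HasTypeC σ Ω Γ c0 C) :
    ∀ e1 op e2 c A Δ, c0 = .call e1 op e2 c → C = .bang A Δ →
      ∃ E R, HasTypeE σ Ω Γ e1 (.eff E R) ∧ Ω.opOf op = E ∧
        HasTypeE σ Ω Γ e2 (Ω.par op) ∧ HasTypeC σ Ω (Ω.res op :: Γ) c (.bang A Δ) ∧
        ∀ ι ∈ R, (ι, op) ∈ Δ := by
  induction h using HasTypeC.rec
    (motive_1 := fun _ _ _ _ => True) (motive_2 := fun _ _ _ _ _ => True)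
  all_goals try trivial
  all_goals intros
  case call => rename_i he1 hop he2 hc hR _ _ _ _ _ _ _ _ _ heq hC; cases heq; cases hC
               exact ⟨_, _, he1, hop, he2, hc, hR⟩
  case sub => rename_i hs ih _ _ _ _ _ _ h1 h2; subst h1 h2; cases hs; rename_i hA hΔ
              obtain ⟨E, R, a, b, c, d, e⟩ := ih _ _ _ _ _ _ rfl rfl
              exact ⟨E, R, a, b, c, .sub d (.bang hA hΔ), fun ι hι => hΔ (e ι hι)⟩
  all_goals simp_all

end CoreEff

namespace CoreEff
variable {σ : Sig} {Ω : OpSig σ} [DecidableEq σ.Inst] [DecidableEq σ.Op]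

theorem succ_inv {Γ : List (PType σ)} {e0 T} (h : HasTypeE σ Ω Γ e0 T) :
    ∀ e, e0 = .succ e → T = .nat → HasTypeE σ Ω Γ e .nat := by
  induction h using HasTypeE.rec
    (motive_2 := fun _ _ _ _ _ => True) (motive_3 := fun _ _ _ _ => True)
  all_goals try trivial
  all_goals intros
  case succ => simp_all
  case sub => rename_i hsp ih _ h1 h2; subst h1 h2; cases hsp; exact ih _ rfl rfl
  all_goals simp_all

theorem fn_inv {Γ : List (PType σ)} {f T} (h : HasTypeE σ Ω Γ f T) :
    ∀ A₀ c A C, f = .fn A₀ c → T = .fn A C →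
      SubP σ A A₀ ∧ HasTypeC σ Ω (A₀ :: Γ) c C := by
  induction h using HasTypeE.rec
    (motive_2 := fun _ _ _ _ _ => True) (motive_3 := fun _ _ _ _ => True)
  all_goals try trivial
  all_goals intros
  case fn => rename_i hc _ _ _ _ _ heq hT; cases heq; cases hT; exact ⟨SubP.refl _, hc⟩
  case sub => rename_i hsp ih _ _ _ _ heq hT; subst hT; cases hsp; rename_i hA hC
              obtain ⟨a, b⟩ := ih _ _ _ _ heq rfl
              exact ⟨SubP.trans hA a, .sub b hC⟩
  all_goals simp_all

theorem eff_canon {Γ : List (PType σ)} {e T} (h : HasTypeE σ Ω Γ e T) :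
    ∀ E R, Γ = [] → T = .eff E R → ∃ κ, e = .inst κ ∧ κ ∈ R ∧ Ω.instOf κ = E := by
  induction h using HasTypeE.rec
    (motive_2 := fun _ _ _ _ _ => True) (motive_3 := fun _ _ _ _ => True)
  all_goals try trivial
  all_goals intros
  case var => rename_i hn _ _ hΓ _; subst hΓ; simp at hn
  case inst => rename_i hmem hall _ _ _ hT; cases hT; exact ⟨_, rfl, hmem, hall _ hmem⟩
  case sub => rename_i hsp ih _ _ hΓ hT; subst hT; cases hsp; rename_i hR
              obtain ⟨κ, a, b, c⟩ := ih _ _ hΓ rfl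
              exact ⟨κ, a, hR b, c⟩
  all_goals simp_all

theorem handler_inv {Γ : List (PType σ)} {hh T} (h : HasTypeE σ Ω Γ hh T) :
    ∀ A cv ocs A₁ Δ₁ D₂, hh = .handler A cv ocs → T = .hand (.bang A₁ Δ₁) D₂ →
      SubP σ A₁ A ∧ ∃ B Δ' Δ'', HasTypeC σ Ω (A :: Γ) cv (.bang B Δ') ∧
        HasTypeO σ Ω Γ ocs (.bang B Δ') Δ'' ∧ Δ₁ ⊆ Δ'' ∪ Δ' ∧
        SubD σ (.bang B Δ') D₂ := by
  induction h using HasTypeE.rec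
    (motive_2 := fun _ _ _ _ _ => True) (motive_3 := fun _ _ _ _ => True)
  all_goals try trivial
  all_goals intros
  case handler =>
    rename_i hcv hocs hΔ _ _ _ _ _ _ _ _ heq hT; cases heq; cases hT
    exact ⟨SubP.refl _, _, _, _, hcv, hocs, hΔ, SubD.refl _⟩
  case sub =>
    rename_i hsp ih _ _ _ _ _ _ heq hT; subst hT; cases hsp; rename_i h1 h2
    cases h1 with
    | bang hA hΔ =>
      obtain ⟨a, B, Δ', Δ'', hcv, hocs, hsubΔ, hD⟩ := ih _ _ _ _ _ _ heq rfl
      exact ⟨SubP.trans hA a, B, Δ', Δ'', hcv, hocs, hΔ.trans hsubΔ, SubD.trans hD h2⟩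
  all_goals simp_all

theorem inst_inv {ι : σ.Inst} {E R} (h : HasTypeE σ Ω [] (.inst ι) (.eff E R)) :
    ι ∈ R ∧ Ω.instOf ι = E := by
  obtain ⟨κ, heq, hm, hi⟩ := eff_canon h E R rfl rfl
  cases heq; exact ⟨hm, hi⟩

end CoreEff

namespace CoreEff
variable {σ : Sig} {Ω : OpSig σ} [DecidableEq σ.Inst] [DecidableEq σ.Op]

theorem dispatch_ty {ocs : OpCases σ} {ι op e κ c'}
    (hd : Dispatch ocs ι op e κ c') :
    ∀ B Δ', Ω.instOf ι = Ω.opOf op →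
    HasTypeE σ Ω [] e (Ω.par op) →
    HasTypeE σ Ω [] κ (.fn (Ω.res op) (.bang B Δ')) →
    ∀ Δ'', HasTypeO σ Ω [] ocs (.bang B Δ') Δ'' → (ι, op) ∈ Δ'' ∪ Δ' →
    HasTypeC σ Ω [] c' (.bang B Δ') := by
  induction hd
  case nil =>
    rename_i C0 ι1 op1 e1 κ1
    intro B Δ' hio he hκ Δ'' hocs hmem
    cases hocs
    have hmem' : (ι1, op1) ∈ Δ' := by simpa using hmem
    refine .call (.inst (Finset.mem_singleton_self _) ?_) rfl he ?_ ?_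
    · intro κ' hκ'; rw [Finset.mem_singleton] at hκ'; subst hκ'; exact hio
    · exact .app (shiftE_ty hκ _) (.var rfl)
    · intro ι' hι'; rw [Finset.mem_singleton] at hι'; subst hι'; exact hmem'
  case found =>
    intro B Δ' hio he hκ Δ'' hocs hmem
    cases hocs; rename_i he' hop hc hocs' hsing hnsing
    exact subst2C_ty he hκ hc
  case skip =>
    rename_i e' op' cb ocs' ι0 op0 e0 κ0 c0 hne hd' ih
    intro B Δ' hio he hκ Δh hocs hmem
    cases hocs; rename_i E' R' Δ₂ he' hop' hc hocs' hnsing hsing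
    refine ih _ _ hio he hκ _ hocs' ?_
    rcases Finset.mem_union.1 hmem with hin | hin
    · by_cases hex : ∃ ι₀, R' = {ι₀}
      · obtain ⟨ι₀, rfl⟩ := hex
        have hins := hsing ι₀ rfl hin
        rcases Finset.mem_insert.1 hins with heq2 | hin2
        · obtain ⟨κ', heq, hκR, _⟩ := eff_canon he' _ _ rfl rfl
          rw [Finset.mem_singleton] at hκR; subst hκR
          obtain ⟨rfl, rfl⟩ := Prod.mk.injEq .. ▸ heq2
          rcases hne with hne | hne
          · exact absurd heq.symm hne
          · exact absurd rfl hne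
        · exact Finset.mem_union_left _ hin2
      · exact Finset.mem_union_left _ (hnsing hex hin)
    · exact Finset.mem_union_right _ hin

theorem preservation {c c' : Comp σ} (hs : Step Ω c c') :
    ∀ C, HasTypeC σ Ω [] c C → HasTypeC σ Ω [] c' C := by
  induction hs
  case iteTrue => intro C h; exact (ite_inv h _ _ _ rfl).2.1
  case iteFalse => intro C h; exact (ite_inv h _ _ _ rfl).2.2
  case caseZero => intro C h; exact (case_inv h _ _ _ rfl).2.1
  case caseSucc =>
    intro C h
    obtain ⟨hs', h1, h2⟩ := case_inv h _ _ _ rfl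
    exact subst0C_ty (succ_inv hs' _ rfl rfl) h2
  case app =>
    intro C h
    obtain ⟨A, h1, h2⟩ := app_inv h _ _ rfl
    obtain ⟨ha, hc⟩ := fn_inv h1 _ _ _ _ rfl rfl
    exact subst0C_ty (.sub h2 ha) hc
  case letCong =>
    rename_i c1 c1' c2 hst ih
    intro C h; obtain ⟨B, Δ⟩ := C
    obtain ⟨A, h1, h2⟩ := letin_inv h _ _ _ _ rfl rfl
    exact .letin (ih _ h1) h2
  case letVal =>
    intro C h; obtain ⟨B, Δ⟩ := C
    obtain ⟨A, h1, h2⟩ := letin_inv h _ _ _ _ rfl rfl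
    exact subst0C_ty (ret_inv h1 _ _ _ rfl rfl) h2
  case letOp =>
    intro C h; obtain ⟨B, Δ⟩ := C
    obtain ⟨A, h1, h2⟩ := letin_inv h _ _ _ _ rfl rfl
    obtain ⟨E, R, hinst, hop, he2, hcont, hR⟩ := call_inv h1 _ _ _ _ _ _ rfl rfl
    exact .call hinst hop he2 (.letin hcont (renC h2 _ _ (liftRen_ok (succ_ok _) _))) hR
  case letrec =>
    rename_i A C c1 c2
    intro D h
    obtain ⟨h1, h2⟩ := letrec_inv h _ _ _ _ rfl
    have hrec : HasTypeE σ Ω [] (recUnfold A C c1) (.fn A C) := by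
      unfold recUnfold
      exact .fn (.letrec (renC h1 _ _ (liftRen_ok (liftRen_ok (succ_ok _) _) _))
                         (renC h1 _ _ (swap_ok _ _)))
    exact subst0C_ty hrec h2
  case handleCong =>
    rename_i hh c c' hst ih
    intro C h
    obtain ⟨C₁, h1, h2⟩ := handle_inv h _ _ rfl
    exact .handle h1 (ih _ h2)
  case handleVal =>
    intro C h
    obtain ⟨C₁, h1, h2⟩ := handle_inv h _ _ rfl
    obtain ⟨A₁, Δ₁⟩ := C₁; obtain ⟨B₂, Δ₂⟩ := C
    obtain ⟨hA, B, Δ', Δ'', hcv, hocs, hΔ, hD⟩ := handler_inv h1 _ _ _ _ _ _ rfl rfl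
    exact .sub (subst0C_ty (.sub (ret_inv h2 _ _ _ rfl rfl) hA) hcv) hD
  case handleOp =>
    rename_i A cv ocs ι op e cc c'' hd
    intro C h
    obtain ⟨C₁, h1, h2⟩ := handle_inv h _ _ rfl
    obtain ⟨A₁, Δ₁⟩ := C₁; obtain ⟨B₂, Δ₂⟩ := C
    obtain ⟨hA, B, Δ', Δ'', hcv, hocs, hΔ, hD⟩ := handler_inv h1 _ _ _ _ _ _ rfl rfl
    obtain ⟨E, R, hinst, hop, he2, hcont, hR⟩ := call_inv h2 _ _ _ _ _ _ rfl rfl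
    obtain ⟨hιR, hio⟩ := inst_inv hinst
    have hio' : Ω.instOf ι = Ω.opOf op := by rw [hio, hop]
    have handler' : HasTypeE σ Ω [] (.handler A cv ocs) (.hand (.bang A₁ Δ₁) (.bang B Δ')) :=
      .sub (.handler hcv hocs hΔ) (.hand (.bang hA le_rfl) (SubD.refl _))
    have hκ : HasTypeE σ Ω [] (.fn (Ω.res op) (.handle (shiftE (.handler A cv ocs)) cc))
        (.fn (Ω.res op) (.bang B Δ')) :=
      .fn (.handle (shiftE_ty handler' _) hcont)
    exact .sub (dispatch_ty hd _ _ hio' he2 hκ Δ'' hocs (hΔ (hR ι hιR))) hD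

theorem star_safety {c r : Comp σ} (hr : StarStep Ω c r) :
    ∀ A Δ, HasTypeC σ Ω [] c (.bang A Δ) →
    (∃ e, r = .ret e ∧ HasTypeE σ Ω [] e A) ∨
    (∃ ι op e c', r = .call (.inst ι) op e c' ∧ (ι, op) ∈ Δ) := by
  induction hr
  case ret => intro A Δ h; exact Or.inl ⟨_, rfl, ret_inv h _ _ _ rfl rfl⟩
  case call =>
    intro A Δ h
    obtain ⟨E, R, hinst, hop, he2, hcont, hR⟩ := call_inv h _ _ _ _ _ _ rfl rfl
    obtain ⟨hι, _⟩ := inst_inv hinst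
    exact Or.inr ⟨_, _, _, _, rfl, hR _ hι⟩
  case step => rename_i hst hsr ih; intro A Δ h; exact ih _ _ (preservation hst _ h)

end CoreEff



namespace CoreEff

/-- **Safety.** If `⊢ c : A ! Δ` is derivable for a closed
computation `c` and `c ⇝* r`, then either `r = val e` with `⊢ e : A`, or
`r = ι#op e (x.c')` with `ι#op ∈ Δ`. -/
theorem safety {σ : Sig} (Ω : OpSig σ) [DecidableEq σ.Inst] [DecidableEq σ.Op]
    (c r : Comp σ) (A : PType σ) (Δ : Finset (σ.Inst × σ.Op))
    (h : HasTypeC σ Ω [] c (.bang A Δ)) (hr : StarStep Ω c r) :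
    (∃ e, r = .ret e ∧ HasTypeE σ Ω [] e A) ∨
    (∃ ι op e c', r = .call (.inst ι) op e c' ∧ (ι, op) ∈ Δ) := by
  exact star_safety hr A Δ h

end CoreEff
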